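/- arXiv:1811.06860 — 2 statements merged into one kernel-verified Lean document; each statement's English description precedes it below -/
import Mathlib

section
/- (Friedberg splitting) Every computably enumerable non-computable set A ⊆ ℕ can be represented as the union of two disjoint computably enumerable non-computable sets: there exist c.e. sets A₀, A₁ with A₀ ∩ A₁ = ∅, A₀ ∪ A₁ = A, and neither A₀ nor A₁ computable. -/
/-- Partial functions `ℕ →. ℕ` computable relative to an oracle `O : ℕ →. ℕ`
(the oracle analogue of `Nat.Partrec`). -/
inductive RecursiveInOracle (O : ℕ →. ℕ) : (ℕ →. ℕ) → Prop
  | oracle : RecursiveInOracle O O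
  | zero : RecursiveInOracle O (pure 0)
  | succ : RecursiveInOracle O ↑Nat.succ
  | left : RecursiveInOracle O ↑fun n : ℕ => n.unpair.1
  | right : RecursiveInOracle O ↑fun n : ℕ => n.unpair.2
  | pair {f g : ℕ →. ℕ} : RecursiveInOracle O f → RecursiveInOracle O g →
      RecursiveInOracle O fun n => Nat.pair <$> f n <*> g n
  | comp {f g : ℕ →. ℕ} : RecursiveInOracle O f → RecursiveInOracle O g →
      RecursiveInOracle O fun n => g n >>= f
  | prec {f g : ℕ →. ℕ} : RecursiveInOracle O f → RecursiveInOracle O g →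
      RecursiveInOracle O (Nat.unpaired fun a n =>
        n.rec (f a) fun y IH => do let i ← IH; g (Nat.pair a (Nat.pair y i)))
  | rfind {f : ℕ →. ℕ} : RecursiveInOracle O f →
      RecursiveInOracle O fun a => Nat.rfind fun n => (fun m => m = 0) <$> f (Nat.pair a n)

open Classical in
/-- The characteristic function of a set of naturals, as a partial function. -/
noncomputable def Set.chi (A : Set ℕ) : ℕ →. ℕ :=
  fun n => Part.some (if n ∈ A then 1 else 0)

/-- Turing reducibility for sets of naturals. -/
def TRed (A B : Set ℕ) : Prop := RecursiveInOracle B.chi A.chi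

/-- Turing incomparability. -/
def TIncomp (A B : Set ℕ) : Prop := ¬ TRed A B ∧ ¬ TRed B A

/-- A set is computably enumerable if it is the domain of a partial computable function. -/
def CE (A : Set ℕ) : Prop := ∃ f : ℕ →. ℕ, Partrec f ∧ ∀ n, n ∈ A ↔ (f n).Dom

/-- Two sets are recursively inseparable if no computable set separates them. -/
def RecInsep (A B : Set ℕ) : Prop :=
  ¬ ∃ D : Set ℕ, ComputablePred (· ∈ D) ∧ A ⊆ D ∧ B ∩ D = ∅

/-- `D` is a separator for the pair `⟨A, B⟩`. -/
def Separator (A B D : Set ℕ) : Prop := A ⊆ D ∧ B ∩ D = ∅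

/-- The halting problem `∅′`. -/
def haltingSet : Set ℕ :=
  {e | ((Denumerable.ofNat Nat.Partrec.Code e).eval e).Dom}


namespace FSplit
open Nat.Partrec (Code)
open Nat.Partrec.Code

/-- The `k`-th enumeration event of the domain of code `c`. -/
def enum (c : Code) (k : ℕ) : Option ℕ :=
  bif (evaln k.unpair.1 c k.unpair.2).isSome then some k.unpair.2 else none

theorem enum_mem {c : Code} {k a : ℕ} (h : enum c k = some a) : (eval c a).Dom := by
  unfold enum at h
  cases hb : (evaln k.unpair.1 c k.unpair.2).isSome with
  | false => rw [hb] at h; simp at h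
  | true =>
    rw [hb] at h; simp at h
    obtain ⟨x, hx⟩ := Option.isSome_iff_exists.1 hb
    subst h
    exact Part.dom_iff_mem.2 ⟨x, evaln_sound hx⟩

theorem mem_enum {c : Code} {a : ℕ} (h : (eval c a).Dom) : ∃ k, enum c k = some a := by
  obtain ⟨x, hx⟩ := Part.dom_iff_mem.1 h
  obtain ⟨k, hk⟩ := evaln_complete.1 hx
  refine ⟨Nat.pair k a, ?_⟩
  unfold enum
  simp [Nat.unpair_pair, hk, Option.isSome_iff_exists.2 ⟨x, hk⟩]

/-- Boolean list membership with uniform decidable equality. -/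
def memB (l : List ℕ) (n : ℕ) : Bool :=
  l.foldr (fun m b => b || decide (m = n)) false

theorem memB_iff {l : List ℕ} {n : ℕ} : memB l n = true ↔ n ∈ l := by
  induction l with
  | nil => simp [memB]
  | cons m l IH =>
    show (memB l n || decide (m = n)) = true ↔ _
    rw [Bool.or_eq_true, IH, decide_eq_true_iff, List.mem_cons]
    constructor
    · rintro (h | h)
      · exact Or.inr h
      · exact Or.inl h.symm
    · rintro (h | h)
      · exact Or.inr h.symm
      · exact Or.inl h

theorem memB_primrec : Primrec₂ memB := by
  have hh : Primrec₂ fun (a : List ℕ × ℕ) (q : ℕ × Bool) => q.2 || decide (q.1 = a.2) :=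
    (Primrec.or.comp (Primrec.snd.comp Primrec.snd)
      (Primrec.eq.decide.comp (Primrec.fst.comp Primrec.snd)
        (Primrec.snd.comp Primrec.fst))).to₂
  exact (Primrec.list_foldr Primrec.fst (Primrec.const false) hh).to₂

/-- `newB c k a = true` iff `a` has not been enumerated before step `k`. -/
def newB (c : Code) (k a : ℕ) : Bool :=
  Nat.rec true (fun j IH => IH && !(decide (enum c j = some a))) k

theorem newB_iff {c : Code} {k a : ℕ} :
    newB c k a = true ↔ ∀ j < k, enum c j ≠ some a := by
  induction k with
  | zero => simp [newB]
  | succ k IH =>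
    show (newB c k a && !(decide (enum c k = some a))) = true ↔ _
    simp only [Bool.and_eq_true, Bool.not_eq_true', decide_eq_false_iff_not, IH, Nat.lt_succ_iff_lt_or_eq]
    constructor
    · rintro ⟨h1, h2⟩ j (hj | rfl)
      · exact h1 j hj
      · exact h2
    · intro h
      exact ⟨fun j hj => h j (Or.inl hj), h k (Or.inr rfl)⟩

theorem newB_false_iff {c : Code} {k a : ℕ} :
    newB c k a = false ↔ ∃ j < k, enum c j = some a := by
  rw [← Bool.not_eq_true, newB_iff]
  push_neg
  rfl

/-- Candidate condition at stage `k` for element `a` and requirement `n`. -/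
def condB (sat : List ℕ) (a k n : ℕ) : Bool :=
  !(memB sat n) && (evaln k (Denumerable.ofNat Code n.unpair.1) a).isSome

theorem condB_iff {sat a k n} :
    condB sat a k n = true ↔
      n ∉ sat ∧ (evaln k (Denumerable.ofNat Code n.unpair.1) a).isSome := by
  rw [condB, Bool.and_eq_true, Bool.not_eq_true']
  rw [← Bool.not_eq_true, memB_iff]

/-- Find the least `m < j` with `condB sat a k m`. -/
def pick (sat : List ℕ) (a k j : ℕ) : Option ℕ :=
  Nat.rec none
    (fun m IH => Option.casesOn IH (bif condB sat a k m then some m else none) some) j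

theorem pick_succ {sat a k j} :
    pick sat a k (j + 1) =
      Option.casesOn (pick sat a k j) (bif condB sat a k j then some j else none) some := rfl

theorem pick_mono {sat a k j n} (h : pick sat a k j = some n) :
    pick sat a k (j + 1) = some n := by
  rw [pick_succ, h]

theorem pick_none {sat a k j} (h : pick sat a k j = none) :
    ∀ m < j, condB sat a k m = false := by
  induction j with
  | zero => intro m hm; omega
  | succ j IH =>
    rw [pick_succ] at h
    cases hp : pick sat a k j with
    | some n => rw [hp] at h; simp at h
    | none =>
      rw [hp] at h
      intro m hm
      rcases Nat.lt_succ_iff_lt_or_eq.1 hm with hm' | rfl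
      · exact IH hp m hm'
      · cases hc : condB sat a k m with
        | false => rfl
        | true => rw [hc] at h; simp at h

theorem pick_spec {sat a k j n} (h : pick sat a k j = some n) :
    n < j ∧ condB sat a k n = true ∧ ∀ m < n, condB sat a k m = false := by
  induction j with
  | zero => simp [pick] at h
  | succ j IH =>
    rw [pick_succ] at h
    cases hp : pick sat a k j with
    | some n' =>
      rw [hp] at h; simp at h; subst h
      obtain ⟨h1, h2, h3⟩ := IH hp
      exact ⟨Nat.lt_succ_of_lt h1, h2, h3⟩
    | none =>
      rw [hp] at h
      cases hc : condB sat a k j with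
      | false => rw [hc] at h; simp at h
      | true =>
        rw [hc] at h; simp at h; subst h
        exact ⟨Nat.lt_succ_self _, hc, pick_none hp⟩

theorem pick_exists {sat a k j m} (hm : m < j) (hc : condB sat a k m = true) :
    ∃ n ≤ m, pick sat a k j = some n := by
  induction j with
  | zero => omega
  | succ j IH =>
    rcases Nat.lt_succ_iff_lt_or_eq.1 hm with hm' | rfl
    · obtain ⟨n, hn, hp⟩ := IH hm'
      exact ⟨n, hn, pick_mono hp⟩
    · cases hp : pick sat a k m with
      | some n =>
        exact ⟨n, le_of_lt (pick_spec hp).1, pick_mono hp⟩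
      | none =>
        refine ⟨m, le_rfl, ?_⟩
        rw [pick_succ, hp, hc]
        rfl

/-- The construction state: elements of `A₀`, elements of `A₁`, satisfied requirements. -/
abbrev St := List ℕ × List ℕ × List ℕ

/-- One step of the Friedberg splitting construction. -/
def step (c : Code) (k : ℕ) (st : St) : St :=
  Option.casesOn (enum c k) st fun a =>
    bif newB c k a then
      Option.casesOn (pick st.2.2 a k k)
        (a :: st.1, st.2.1, st.2.2)
        (fun n =>
          bif decide (n.unpair.2 % 2 = 1) then (st.1, a :: st.2.1, n :: st.2.2)
          else (a :: st.1, st.2.1, n :: st.2.2))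
    else st

/-- The construction run for `k` steps. -/
def run (c : Code) (k : ℕ) : St :=
  Nat.rec ([], [], []) (fun j IH => step c j IH) k

theorem run_succ {c k} : run c (k + 1) = step c k (run c k) := rfl

/-- `a` is processed at stage `k`: it appears there for the first time. -/
def procAt (c : Code) (k a : ℕ) : Prop :=
  enum c k = some a ∧ ∀ j < k, enum c j ≠ some a

theorem procAt_unique_elt {c k a a'} (h : procAt c k a) (h' : procAt c k a') : a = a' := by
  have := h.1.symm.trans h'.1
  simpa using this

theorem procAt_unique_stage {c k k' a} (h : procAt c k a) (h' : procAt c k' a) : k = k' := by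
  rcases lt_trichotomy k k' with hl | he | hl
  · exact absurd h.1 (h'.2 k hl)
  · exact he
  · exact absurd h'.1 (h.2 k' hl)

/-- The requirement picked when `a` is processed at stage `k`. -/
def pickAt (c : Code) (k a : ℕ) : Option ℕ := pick (run c k).2.2 a k k

/-- Which side (`false` = A₀, `true` = A₁) element `a` goes to at stage `k`. -/
def sideAt (c : Code) (k a : ℕ) : Bool :=
  Option.casesOn (pickAt c k a) false fun n => decide (n.unpair.2 % 2 = 1)

/-- Requirement `n` gets satisfied at stage `j`. -/
def satPicked (c : Code) (j n : ℕ) : Prop :=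
  ∃ a, procAt c j a ∧ pickAt c j a = some n

theorem mem_run (c : Code) (k : ℕ) :
    (∀ x, x ∈ (run c k).1 ↔ ∃ j < k, procAt c j x ∧ sideAt c j x = false) ∧
    (∀ x, x ∈ (run c k).2.1 ↔ ∃ j < k, procAt c j x ∧ sideAt c j x = true) ∧
    (∀ n, n ∈ (run c k).2.2 ↔ ∃ j < k, satPicked c j n) := by
  induction k with
  | zero =>
    refine ⟨fun x => ?_, fun x => ?_, fun n => ?_⟩ <;> simp [run]
  | succ k IH =>
    obtain ⟨IH1, IH2, IH3⟩ := IH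
    have hlt : ∀ (P : ℕ → Prop), (∃ j < k + 1, P j) ↔ (∃ j < k, P j) ∨ P k := by
      intro P
      constructor
      · rintro ⟨j, hj, hP⟩
        rcases Nat.lt_succ_iff_lt_or_eq.1 hj with h | rfl
        · exact Or.inl ⟨j, h, hP⟩
        · exact Or.inr hP
      · rintro (⟨j, hj, hP⟩ | hP)
        · exact ⟨j, Nat.lt_succ_of_lt hj, hP⟩
        · exact ⟨k, Nat.lt_succ_self _, hP⟩
    cases he : enum c k with
    | none =>
      have hr : run c (k + 1) = run c k := by
        rw [run_succ]; unfold step; rw [he]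
      have hnoproc : ∀ x, ¬ procAt c k x := by
        intro x hp
        simpa using he.symm.trans hp.1
      refine ⟨fun x => ?_, fun x => ?_, fun n => ?_⟩ <;> rw [hr] <;> simp only [hlt]
      · rw [IH1 x]
        exact (or_iff_left (fun h => hnoproc x h.1)).symm
      · rw [IH2 x]
        exact (or_iff_left (fun h => hnoproc x h.1)).symm
      · rw [IH3 n]
        refine (or_iff_left ?_).symm
        rintro ⟨a, hpa, _⟩
        exact hnoproc a hpa
    | some a =>
      cases hnew : newB c k a with
      | false =>
        have hr : run c (k + 1) = run c k := by
          rw [run_succ]; unfold step; rw [he]; simp only [hnew, cond_false]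
        have hnoproc : ∀ x, ¬ procAt c k x := by
          intro x hp
          have hxa : a = x := by simpa using he.symm.trans hp.1
          subst hxa
          obtain ⟨j, hj, hje⟩ := newB_false_iff.1 hnew
          exact hp.2 j hj hje
        refine ⟨fun x => ?_, fun x => ?_, fun n => ?_⟩ <;> rw [hr] <;> simp only [hlt]
        · rw [IH1 x]
          exact (or_iff_left (fun h => hnoproc x h.1)).symm
        · rw [IH2 x]
          exact (or_iff_left (fun h => hnoproc x h.1)).symm
        · rw [IH3 n]
          refine (or_iff_left ?_).symm
          rintro ⟨a', hpa, _⟩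
          exact hnoproc a' hpa
      | true =>
        have hproc : procAt c k a := ⟨he, fun j hj => newB_iff.1 hnew j hj⟩
        have hprociff : ∀ x, procAt c k x → x = a := fun x hx => procAt_unique_elt hx hproc
        cases hp : pick (run c k).2.2 a k k with
        | none =>
          have hr : run c (k + 1) = (a :: (run c k).1, (run c k).2.1, (run c k).2.2) := by
            rw [run_succ]; unfold step; rw [he]; simp only [hnew, cond_true, hp]
          have hside : sideAt c k a = false := by
            unfold sideAt pickAt; rw [hp]
          have hsat : ∀ n, ¬ satPicked c k n := by
            rintro n ⟨a', hpa, hpk⟩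
            have : a' = a := hprociff a' hpa
            subst this
            unfold pickAt at hpk
            rw [hp] at hpk; simp at hpk
          refine ⟨fun x => ?_, fun x => ?_, fun n => ?_⟩ <;> rw [hr] <;> simp only [hlt]
          · rw [List.mem_cons, IH1 x]
            constructor
            · rintro (rfl | h)
              · exact Or.inr ⟨hproc, hside⟩
              · exact Or.inl h
            · rintro (h | ⟨h1, _⟩)
              · exact Or.inr h
              · exact Or.inl (hprociff x h1)
          · rw [IH2 x]
            constructor
            · exact Or.inl
            · rintro (h | ⟨h1, h2⟩)
              · exact h
              · have : x = a := hprociff x h1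
                subst this
                rw [hside] at h2; simp at h2
          · rw [IH3 n]
            constructor
            · exact Or.inl
            · rintro (h | h)
              · exact h
              · exact absurd h (hsat n)
        | some m =>
          have hsidea : sideAt c k a = (decide (m.unpair.2 % 2 = 1)) := by
            unfold sideAt pickAt; rw [hp]
          have hsat : ∀ n, satPicked c k n ↔ n = m := by
            intro n
            constructor
            · rintro ⟨a', hpa, hpk⟩
              have : a' = a := hprociff a' hpa
              subst this
              unfold pickAt at hpk
              rw [hp] at hpk; simpa using hpk.symm
            · rintro rfl
              exact ⟨a, hproc, by unfold pickAt; rw [hp]⟩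
          cases hpar : (decide (m.unpair.2 % 2 = 1)) with
          | false =>
            have hr : run c (k + 1) = (a :: (run c k).1, (run c k).2.1, m :: (run c k).2.2) := by
              rw [run_succ]; unfold step; rw [he]; simp only [hnew, cond_true, hp, hpar, cond_false]
            refine ⟨fun x => ?_, fun x => ?_, fun n => ?_⟩ <;> rw [hr] <;> simp only [hlt]
            · rw [List.mem_cons, IH1 x]
              constructor
              · rintro (rfl | h)
                · exact Or.inr ⟨hproc, by rw [hsidea, hpar]⟩
                · exact Or.inl h
              · rintro (h | ⟨h1, _⟩)
                · exact Or.inr h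
                · exact Or.inl (hprociff x h1)
            · rw [IH2 x]
              constructor
              · exact Or.inl
              · rintro (h | ⟨h1, h2⟩)
                · exact h
                · have : x = a := hprociff x h1
                  subst this
                  rw [hsidea, hpar] at h2; simp at h2
            · rw [List.mem_cons, IH3 n]
              constructor
              · rintro (rfl | h)
                · exact Or.inr ((hsat n).2 rfl)
                · exact Or.inl h
              · rintro (h | h)
                · exact Or.inr h
                · exact Or.inl ((hsat n).1 h)
          | true =>
            have hr : run c (k + 1) = ((run c k).1, a :: (run c k).2.1, m :: (run c k).2.2) := by
              rw [run_succ]; unfold step; rw [he]; simp only [hnew, cond_true, hp, hpar, cond_false]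
            refine ⟨fun x => ?_, fun x => ?_, fun n => ?_⟩ <;> rw [hr] <;> simp only [hlt]
            · rw [IH1 x]
              constructor
              · exact Or.inl
              · rintro (h | ⟨h1, h2⟩)
                · exact h
                · have : x = a := hprociff x h1
                  subst this
                  rw [hsidea, hpar] at h2; simp at h2
            · rw [List.mem_cons, IH2 x]
              constructor
              · rintro (rfl | h)
                · exact Or.inr ⟨hproc, by rw [hsidea, hpar]⟩
                · exact Or.inl h
              · rintro (h | ⟨h1, _⟩)
                · exact Or.inr h
                · exact Or.inl (hprociff x h1)
            · rw [List.mem_cons, IH3 n]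
              constructor
              · rintro (rfl | h)
                · exact Or.inr ((hsat n).2 rfl)
                · exact Or.inl h
              · rintro (h | h)
                · exact Or.inr h
                · exact Or.inl ((hsat n).1 h)

/-- The two halves of the splitting. -/
def Aset (c : Code) (i : Bool) : Set ℕ := {x | ∃ j, procAt c j x ∧ sideAt c j x = i}

theorem Aset_disjoint (c : Code) : Aset c false ∩ Aset c true = ∅ := by
  ext x
  simp only [Set.mem_inter_iff, Set.mem_empty_iff_false, iff_false]
  rintro ⟨⟨j, hj, hjs⟩, ⟨j', hj', hjs'⟩⟩
  have : j = j' := procAt_unique_stage hj hj'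
  subst this
  rw [hjs] at hjs'
  exact Bool.false_ne_true hjs'

theorem mem_Aset_dom {c : Code} {i : Bool} {x : ℕ} (h : x ∈ Aset c i) : (eval c x).Dom := by
  obtain ⟨j, hj, _⟩ := h
  exact enum_mem hj.1

theorem Aset_union (c : Code) : Aset c false ∪ Aset c true = {x | (eval c x).Dom} := by
  ext x
  simp only [Set.mem_union, Set.mem_setOf_eq]
  constructor
  · rintro (h | h) <;> exact mem_Aset_dom h
  · intro h
    have hex : ∃ k, enum c k = some x := mem_enum h
    have hproc : procAt c (Nat.find hex) x :=
      ⟨Nat.find_spec hex, fun j hj => Nat.find_min hex hj⟩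
    cases hs : sideAt c (Nat.find hex) x with
    | false => exact Or.inl ⟨_, hproc, hs⟩
    | true => exact Or.inr ⟨_, hproc, hs⟩

theorem Aset_eq_run_false (c : Code) : Aset c false = {x | ∃ k, x ∈ (run c k).1} := by
  ext x
  simp only [Aset, Set.mem_setOf_eq]
  constructor
  · rintro ⟨j, hj, hs⟩
    exact ⟨j + 1, ((mem_run c (j+1)).1 x).2 ⟨j, Nat.lt_succ_self _, hj, hs⟩⟩
  · rintro ⟨k, hk⟩
    obtain ⟨j, _, hj, hs⟩ := ((mem_run c k).1 x).1 hk
    exact ⟨j, hj, hs⟩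

theorem Aset_eq_run_true (c : Code) : Aset c true = {x | ∃ k, x ∈ (run c k).2.1} := by
  ext x
  simp only [Aset, Set.mem_setOf_eq]
  constructor
  · rintro ⟨j, hj, hs⟩
    exact ⟨j + 1, ((mem_run c (j+1)).2.1 x).2 ⟨j, Nat.lt_succ_self _, hj, hs⟩⟩
  · rintro ⟨k, hk⟩
    obtain ⟨j, _, hj, hs⟩ := ((mem_run c k).2.1 x).1 hk
    exact ⟨j, hj, hs⟩

theorem satPicked_unique {c : Code} {j j' n : ℕ}
    (h : satPicked c j n) (h' : satPicked c j' n) : j = j' := by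
  rcases lt_trichotomy j j' with hl | he | hl
  · exfalso
    obtain ⟨a, hpa, hpk⟩ := h'
    have hmem : n ∈ (run c j').2.2 := ((mem_run c j').2.2 n).2 ⟨j, hl, h⟩
    have := (pick_spec hpk).2.1
    exact (condB_iff.1 this).1 hmem
  · exact he
  · exfalso
    obtain ⟨a, hpa, hpk⟩ := h
    have hmem : n ∈ (run c j).2.2 := ((mem_run c j).2.2 n).2 ⟨j', hl, h'⟩
    have := (pick_spec hpk).2.1
    exact (condB_iff.1 this).1 hmem

section Computability

open Computable

variable {c' : Code}

theorem enum_computable (c : Code) : Computable (enum c) := by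
  have hu1 : Computable fun k : ℕ => k.unpair.1 :=
    (Primrec.fst.comp Primrec.unpair).to_comp
  have hu2 : Computable fun k : ℕ => k.unpair.2 :=
    (Primrec.snd.comp Primrec.unpair).to_comp
  have hev : Computable fun k : ℕ => evaln k.unpair.1 c k.unpair.2 :=
    primrec_evaln.to_comp.comp (Computable.pair (Computable.pair hu1 (const c)) hu2)
  exact Computable.cond (Primrec.option_isSome.to_comp.comp hev)
    (option_some.comp hu2) (const none)

theorem newB_computable (c : Code) : Computable₂ (newB c) := by
  have hh : Computable₂ fun (p : ℕ × ℕ) (y : ℕ × Bool) =>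
      y.2 && !(decide (enum c y.1 = some p.2)) := by
    have h1 : Computable fun q : (ℕ × ℕ) × (ℕ × Bool) => q.2.2 :=
      snd.comp snd
    have h2 : Computable fun q : (ℕ × ℕ) × (ℕ × Bool) => !(decide (enum c q.2.1 = some q.1.2)) :=
      Primrec.not.to_comp.comp
        (Primrec.eq.decide.to_comp.comp ((enum_computable c).comp (fst.comp snd))
          (option_some.comp (snd.comp fst)))
    exact (Primrec.and.to_comp.comp h1 h2).to₂
  exact (Computable.nat_rec fst (const true) hh).of_eq fun p => rfl

set_option maxHeartbeats 2000000 in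
theorem pick_computable :
    Computable fun q : (List ℕ × ℕ × ℕ) × ℕ => pick q.1.1 q.1.2.1 q.1.2.2 q.2 := by
  have hcond : Computable fun r : ((List ℕ × ℕ × ℕ) × ℕ) × (ℕ × Option ℕ) =>
      condB r.1.1.1 r.1.1.2.1 r.1.1.2.2 r.2.1 := by
    have hsat : Computable fun r : ((List ℕ × ℕ × ℕ) × ℕ) × (ℕ × Option ℕ) => r.1.1.1 :=
      fst.comp (fst.comp fst)
    have ha : Computable fun r : ((List ℕ × ℕ × ℕ) × ℕ) × (ℕ × Option ℕ) => r.1.1.2.1 :=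
      fst.comp (snd.comp (fst.comp fst))
    have hk : Computable fun r : ((List ℕ × ℕ × ℕ) × ℕ) × (ℕ × Option ℕ) => r.1.1.2.2 :=
      snd.comp (snd.comp (fst.comp fst))
    have hn : Computable fun r : ((List ℕ × ℕ × ℕ) × ℕ) × (ℕ × Option ℕ) => r.2.1 :=
      fst.comp snd
    have hmem : Computable fun r : ((List ℕ × ℕ × ℕ) × ℕ) × (ℕ × Option ℕ) =>
        !(memB r.1.1.1 r.2.1) :=
      Primrec.not.to_comp.comp (memB_primrec.to_comp.comp hsat hn)
    have hev : Computable fun r : ((List ℕ × ℕ × ℕ) × ℕ) × (ℕ × Option ℕ) =>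
        (evaln r.1.1.2.2 (Denumerable.ofNat Code r.2.1.unpair.1) r.1.1.2.1).isSome :=
      Primrec.option_isSome.to_comp.comp
        (primrec_evaln.to_comp.comp (Computable.pair
          (Computable.pair hk
            ((Computable.ofNat Code).comp ((Primrec.fst.comp Primrec.unpair).to_comp.comp hn)))
          ha))
    exact Primrec.and.to_comp.comp hmem hev
  have hh : Computable₂ fun (q : (List ℕ × ℕ × ℕ) × ℕ) (y : ℕ × Option ℕ) =>
      Option.casesOn (motive := fun _ => Option ℕ) y.2
        (bif condB q.1.1 q.1.2.1 q.1.2.2 y.1 then some y.1 else none) some := by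
    have ho : Computable fun r : ((List ℕ × ℕ × ℕ) × ℕ) × (ℕ × Option ℕ) => r.2.2 :=
      snd.comp snd
    have hf : Computable fun r : ((List ℕ × ℕ × ℕ) × ℕ) × (ℕ × Option ℕ) =>
        (bif condB r.1.1.1 r.1.1.2.1 r.1.1.2.2 r.2.1 then some r.2.1 else none) :=
      Computable.cond hcond (option_some.comp (fst.comp snd)) (const none)
    exact (Computable.option_casesOn ho hf (option_some.comp snd).to₂).to₂
  exact (Computable.nat_rec snd (const none) hh).of_eq fun q => rfl

attribute [irreducible] enum newB pick memB

set_option maxHeartbeats 1000000 in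
theorem step_aux_k : Computable fun q : (ℕ × St) × ℕ => q.1.1 := fst.comp fst

set_option maxHeartbeats 1000000 in
theorem step_aux_L0 : Computable fun q : (ℕ × St) × ℕ => q.1.2.1 := fst.comp (snd.comp fst)

set_option maxHeartbeats 1000000 in
theorem step_aux_L1 : Computable fun q : (ℕ × St) × ℕ => q.1.2.2.1 :=
  fst.comp (snd.comp (snd.comp fst))

set_option maxHeartbeats 1000000 in
theorem step_aux_sat : Computable fun q : (ℕ × St) × ℕ => q.1.2.2.2 :=
  snd.comp (snd.comp (snd.comp fst))

set_option maxHeartbeats 2000000 in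
theorem step_aux_pick : Computable fun q : (ℕ × St) × ℕ => pick q.1.2.2.2 q.2 q.1.1 q.1.1 :=
  pick_computable.comp
    (Computable.pair (Computable.pair step_aux_sat (Computable.pair snd step_aux_k)) step_aux_k)

set_option maxHeartbeats 2000000 in
theorem step_aux_base : Computable fun q : (ℕ × St) × ℕ =>
    ((q.2 :: q.1.2.1, q.1.2.2.1, q.1.2.2.2) : St) :=
  Computable.pair (Primrec.list_cons.to_comp.comp snd step_aux_L0)
    (Computable.pair step_aux_L1 step_aux_sat)

set_option maxHeartbeats 2000000 in
theorem step_aux_gg : Computable₂ fun (q : (ℕ × St) × ℕ) (n : ℕ) =>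
    ((bif decide (n.unpair.2 % 2 = 1) then (q.1.2.1, q.2 :: q.1.2.2.1, n :: q.1.2.2.2)
      else (q.2 :: q.1.2.1, q.1.2.2.1, n :: q.1.2.2.2)) : St) := by
  have hn : Computable fun r : ((ℕ × St) × ℕ) × ℕ => r.2 := snd
  have htest : Computable fun r : ((ℕ × St) × ℕ) × ℕ => decide (r.2.unpair.2 % 2 = 1) :=
    Primrec.eq.decide.to_comp.comp
      (Primrec.nat_mod.to_comp.comp
        ((Primrec.snd.comp Primrec.unpair).to_comp.comp hn) (const 2))
      (const 1)
  have htrue : Computable fun r : ((ℕ × St) × ℕ) × ℕ =>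
      ((r.1.1.2.1, r.1.2 :: r.1.1.2.2.1, r.2 :: r.1.1.2.2.2) : St) :=
    Computable.pair (step_aux_L0.comp fst)
      (Computable.pair (Primrec.list_cons.to_comp.comp (snd.comp fst) (step_aux_L1.comp fst))
        (Primrec.list_cons.to_comp.comp hn (step_aux_sat.comp fst)))
  have hfalse : Computable fun r : ((ℕ × St) × ℕ) × ℕ =>
      ((r.1.2 :: r.1.1.2.1, r.1.1.2.2.1, r.2 :: r.1.1.2.2.2) : St) :=
    Computable.pair (Primrec.list_cons.to_comp.comp (snd.comp fst) (step_aux_L0.comp fst))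
      (Computable.pair (step_aux_L1.comp fst)
        (Primrec.list_cons.to_comp.comp hn (step_aux_sat.comp fst)))
  exact (Computable.cond htest htrue hfalse).to₂

set_option maxHeartbeats 4000000 in
theorem step_aux_inner : Computable fun q : (ℕ × St) × ℕ =>
    Option.casesOn (motive := fun _ => St) (pick q.1.2.2.2 q.2 q.1.1 q.1.1)
      (q.2 :: q.1.2.1, q.1.2.2.1, q.1.2.2.2)
      (fun n =>
        bif decide (n.unpair.2 % 2 = 1) then (q.1.2.1, q.2 :: q.1.2.2.1, n :: q.1.2.2.2)
        else (q.2 :: q.1.2.1, q.1.2.2.1, n :: q.1.2.2.2)) :=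
  Computable.option_casesOn step_aux_pick step_aux_base step_aux_gg

set_option maxHeartbeats 4000000 in
theorem step_aux_g : Computable₂ fun (p : ℕ × St) (a : ℕ) =>
    (bif newB c' p.1 a then
      Option.casesOn (motive := fun _ => St) (pick p.2.2.2 a p.1 p.1)
        (a :: p.2.1, p.2.2.1, p.2.2.2)
        (fun n =>
          bif decide (n.unpair.2 % 2 = 1) then (p.2.1, a :: p.2.2.1, n :: p.2.2.2)
          else (a :: p.2.1, p.2.2.1, n :: p.2.2.2))
    else p.2) :=
  (Computable.cond ((newB_computable c').comp step_aux_k snd)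
    step_aux_inner (snd.comp fst)).to₂

set_option maxHeartbeats 4000000 in
theorem step_computable (c : Code) : Computable₂ (step c) :=
  (Computable.option_casesOn (α := ℕ × St)
    ((enum_computable c).comp fst) snd (step_aux_g (c' := c))).of_eq fun p => rfl

attribute [irreducible] step

set_option maxHeartbeats 2000000 in
theorem run_computable (c : Code) : Computable (run c) := by
  have hh : Computable₂ fun (_ : ℕ) (y : ℕ × St) => step c y.1 y.2 :=
    ((step_computable c).comp (fst.comp snd) (snd.comp snd)).to₂
  exact (Computable.nat_rec Computable.id (const (([], [], []) : St)) hh).of_eq fun k => rfl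

attribute [irreducible] run

end Computability

section Main

open Computable

/-- The list of elements put on side `i` by stage `k`. -/
def runlist (c : Code) (i : Bool) (k : ℕ) : List ℕ :=
  bif i then (run c k).2.1 else (run c k).1

theorem runlist_computable (c : Code) (i : Bool) : Computable (runlist c i) := by
  cases i
  · exact fst.comp (run_computable c)
  · exact fst.comp (snd.comp (run_computable c))

theorem Aset_eq_runlist (c : Code) (i : Bool) :
    ∀ x, x ∈ Aset c i ↔ ∃ k, memB (runlist c i k) x = true := by
  intro x
  cases i
  · rw [show (x ∈ Aset c false) = (x ∈ {x | ∃ k, x ∈ (run c k).1}) from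
      congrArg (x ∈ ·) (Aset_eq_run_false c)]
    simp only [Set.mem_setOf_eq]
    exact exists_congr fun k => by rw [memB_iff]; rfl
  · rw [show (x ∈ Aset c true) = (x ∈ {x | ∃ k, x ∈ (run c k).2.1}) from
      congrArg (x ∈ ·) (Aset_eq_run_true c)]
    simp only [Set.mem_setOf_eq]
    exact exists_congr fun k => by rw [memB_iff]; rfl

theorem ce_Aset (c : Code) (i : Bool) :
    ∃ f : ℕ →. ℕ, Partrec f ∧ ∀ n, n ∈ Aset c i ↔ (f n).Dom := by
  refine ⟨fun x => Nat.rfind fun k => Part.some (memB (runlist c i k) x), ?_, ?_⟩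
  · apply Partrec.rfind
    apply Computable₂.partrec₂
    exact (memB_primrec.to_comp.comp ((runlist_computable c i).comp snd) fst).to₂
  · intro n
    rw [Aset_eq_runlist c i n]
    constructor
    · rintro ⟨k, hk⟩
      exact Nat.rfind_dom.2 ⟨k, by simpa using hk, fun {m} _ => trivial⟩
    · intro h
      obtain ⟨m, hm, _⟩ := Nat.rfind_dom.1 h
      exact ⟨m, by simpa using hm⟩

/-- The key lemma: if one half of the splitting is computable, then so is the whole set. -/
theorem side_computable (c : Code) (i : Bool)
    (hcomp : ComputablePred (· ∈ Aset c i)) :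
    ComputablePred fun x => (eval c x).Dom := by
  classical
  have hre : REPred fun a => ¬ a ∈ Aset c i := hcomp.not.to_re
  have hgp : Partrec fun a =>
      (Part.assert (¬ a ∈ Aset c i) fun _ => Part.some ()).map fun _ => (0 : ℕ) :=
    hre.map ((const 0).comp fst).to₂
  obtain ⟨e, he⟩ := exists_code.1 (Partrec.nat_iff.1 hgp)
  have hdome : ∀ x, (eval e x).Dom ↔ ¬ x ∈ Aset c i := by
    intro x
    rw [he]
    simp only [Part.map_Dom]
    exact ⟨fun h => h.fst, fun h => ⟨h, trivial⟩⟩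
  set N := Nat.pair (Encodable.encode e) (bif i then 1 else 0) with hNdef
  have hN1 : Denumerable.ofNat Code N.unpair.1 = e := by
    rw [hNdef, Nat.unpair_pair]
    exact Denumerable.ofNat_encode e
  have hN2 : decide (N.unpair.2 % 2 = 1) = i := by
    rw [hNdef, Nat.unpair_pair]
    cases i <;> simp
  -- requirement N is never satisfied
  have claim1 : ∀ j, ¬ satPicked c j N := by
    rintro j ⟨a, hpa, hpk⟩
    unfold pickAt at hpk
    have hspec := pick_spec hpk
    have hcond := condB_iff.1 hspec.2.1
    have hevs : (evaln j e a).isSome := by rw [hN1] at hcond; exact hcond.2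
    have hdom : (eval e a).Dom := by
      obtain ⟨v, hv⟩ := Option.isSome_iff_exists.1 hevs
      exact Part.dom_iff_mem.2 ⟨v, evaln_sound hv⟩
    have hside : sideAt c j a = i := by
      unfold sideAt pickAt
      rw [hpk]
      exact hN2
    exact (hdome a).1 hdom ⟨j, hpa, hside⟩
  -- stability of lower-priority requirements
  obtain ⟨s₀, hs₀⟩ : ∃ s₀, ∀ n < N, ∀ j, satPicked c j n → j < s₀ := by
    refine ⟨((Finset.range N).sup fun n =>
      if h : ∃ j, satPicked c j n then h.choose + 1 else 0) + 1, ?_⟩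
    intro n hn j hj
    have hex : ∃ j', satPicked c j' n := ⟨j, hj⟩
    have hje : j = hex.choose := satPicked_unique hj hex.choose_spec
    have hle : (if h : ∃ j', satPicked c j' n then h.choose + 1 else 0) ≤
        (Finset.range N).sup fun n =>
          if h : ∃ j, satPicked c j n then h.choose + 1 else 0 :=
      Finset.le_sup (f := fun n => if h : ∃ j, satPicked c j n then h.choose + 1 else 0)
        (Finset.mem_range.2 hn)
    rw [dif_pos hex] at hle
    omega
  set K := max s₀ (N + 1) with hKdef
  -- after stage K, no processed element can be seen in `W_e`
  have claim3 : ∀ a j, K ≤ j → procAt c j a → (evaln j e a).isSome → False := by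
    intro a j hKj hpa hev
    have hNsat : N ∉ (run c j).2.2 := by
      intro hmem
      obtain ⟨j', _, hs⟩ := ((mem_run c j).2.2 N).1 hmem
      exact claim1 j' hs
    have hcond : condB (run c j).2.2 a j N = true :=
      condB_iff.2 ⟨hNsat, by rw [hN1]; exact hev⟩
    have hNj : N < j := by omega
    obtain ⟨n, hnN, hpk⟩ := pick_exists hNj hcond
    have hsatn : satPicked c j n := ⟨a, hpa, hpk⟩
    rcases eq_or_lt_of_le hnN with rfl | hlt
    · exact claim1 j hsatn
    · have := hs₀ n hlt j hsatn
      omega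
  -- the decision procedure
  set qB : ℕ → ℕ → Bool :=
    fun x m => !newB c (K + m) x || (evaln (K + m) e x).isSome with hqBdef
  have hex : ∀ x, ∃ m, qB x m = true := by
    intro x
    by_cases hx : (eval c x).Dom
    · obtain ⟨k, hk⟩ := mem_enum hx
      refine ⟨k + 1, ?_⟩
      have h1 : newB c (K + (k + 1)) x = false := newB_false_iff.2 ⟨k, by omega, hk⟩
      simp [hqBdef, h1]
    · have hnA : ¬ x ∈ Aset c i := fun h => hx (mem_Aset_dom h)
      obtain ⟨v, hv⟩ := Part.dom_iff_mem.1 ((hdome x).2 hnA)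
      obtain ⟨k, hk⟩ := evaln_complete.1 hv
      refine ⟨k, ?_⟩
      have h2 : (evaln (K + k) e x).isSome :=
        Option.isSome_iff_exists.2 ⟨v, evaln_mono (by omega) hk⟩
      simp [hqBdef, h2]
  set F : ℕ → Bool := fun x => !newB c (K + Nat.find (hex x)) x with hFdef
  -- F decides membership
  have hFA : ∀ x, (eval c x).Dom ↔ F x = true := by
    intro x
    cases hnb : newB c (K + Nat.find (hex x)) x with
    | false =>
      constructor
      · intro _
        rw [hFdef]
        simp [hnb]
      · intro _
        obtain ⟨j, _, hje⟩ := newB_false_iff.1 hnb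
        exact enum_mem hje
    | true =>
      have hq : (!newB c (K + Nat.find (hex x)) x ||
          (evaln (K + Nat.find (hex x)) e x).isSome) = true := Nat.find_spec (hex x)
      rw [hnb] at hq
      have hev : (evaln (K + Nat.find (hex x)) e x).isSome := by simpa using hq
      constructor
      · intro hx
        exfalso
        have hke : ∃ j, enum c j = some x := mem_enum hx
        have hpa : procAt c (Nat.find hke) x :=
          ⟨Nat.find_spec hke, fun j hj => Nat.find_min hke hj⟩
        have hjk : K + Nat.find (hex x) ≤ Nat.find hke := by
          by_contra hcon
          push_neg at hcon
          exact (newB_iff.1 hnb (Nat.find hke) hcon) (Nat.find_spec hke)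
        have hev' : (evaln (Nat.find hke) e x).isSome := by
          obtain ⟨v, hv⟩ := Option.isSome_iff_exists.1 hev
          exact Option.isSome_iff_exists.2 ⟨v, evaln_mono hjk hv⟩
        exact claim3 x (Nat.find hke) (by omega) hpa hev'
      · intro hF
        exfalso
        rw [hFdef] at hF
        simp [hnb] at hF
  -- F is computable
  have hqBc : Computable₂ qB := by
    have hKm : Computable fun p : ℕ × ℕ => K + p.2 :=
      Primrec.nat_add.to_comp.comp (const K) snd
    have h1 : Computable fun p : ℕ × ℕ => !newB c (K + p.2) p.1 :=
      Primrec.not.to_comp.comp ((newB_computable c).comp hKm fst)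
    have h2 : Computable fun p : ℕ × ℕ => (evaln (K + p.2) e p.1).isSome :=
      Primrec.option_isSome.to_comp.comp
        (primrec_evaln.to_comp.comp (Computable.pair (Computable.pair hKm (const e)) fst))
    exact (Primrec.or.to_comp.comp h1 h2).to₂
  have hFc : Computable F := by
    have hmap : Computable₂ fun (x : ℕ) (m : ℕ) => !newB c (K + m) x :=
      (Primrec.not.to_comp.comp ((newB_computable c).comp
        (Primrec.nat_add.to_comp.comp (const K) snd) fst)).to₂
    have hpart : Partrec fun x =>
        (Nat.rfind fun m => (Part.some (qB x m) : Part Bool)).map fun m => !newB c (K + m) x :=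
      (Partrec.rfind hqBc.partrec₂).map hmap
    apply hpart.of_eq_tot
    intro x
    rw [Part.mem_map_iff]
    refine ⟨Nat.find (hex x), Nat.mem_rfind.2 ⟨?_, ?_⟩, rfl⟩
    · exact Part.mem_some_iff.2 (Nat.find_spec (hex x)).symm
    · intro m hm
      refine Part.mem_some_iff.2 ?_
      have h3 : qB x m = false := Bool.eq_false_iff.2 (Nat.find_min (hex x) hm)
      exact h3.symm
  exact ComputablePred.computable_iff.2
    ⟨F, hFc, funext fun x => propext (hFA x)⟩

end Main

end FSplit

theorem stmt12 (A : Set ℕ) (hA : CE A) (hA' : ¬ ComputablePred (· ∈ A)) :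
    ∃ A₀ A₁ : Set ℕ, CE A₀ ∧ CE A₁ ∧ A₀ ∩ A₁ = ∅ ∧ A₀ ∪ A₁ = A ∧
      ¬ ComputablePred (· ∈ A₀) ∧ ¬ ComputablePred (· ∈ A₁) := by
  obtain ⟨f, hf, hfd⟩ := hA
  obtain ⟨c, hc⟩ := Nat.Partrec.Code.exists_code.1 (Partrec.nat_iff.1 hf)
  have hAdom : ∀ n, n ∈ A ↔ (Nat.Partrec.Code.eval c n).Dom := fun n => (hfd n).trans (by rw [hc])
  refine ⟨FSplit.Aset c false, FSplit.Aset c true, FSplit.ce_Aset c false,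
    FSplit.ce_Aset c true, FSplit.Aset_disjoint c, ?_, ?_, ?_⟩
  · rw [FSplit.Aset_union c]
    ext x
    simpa using (hAdom x).symm
  · intro hcomp
    exact hA' ((FSplit.side_computable c false hcomp).of_eq fun n => (hAdom n).symm)
  · intro hcomp
    exact hA' ((FSplit.side_computable c true hcomp).of_eq fun n => (hAdom n).symm)
end

section
/- There exists a computably enumerable set A ⊆ ℕ whose complement ℕ \ A is infinite, hyperimmune, and not hyperhyperimmune. -/
/-- The canonical finite set with index `n` (canonical bijective coding of finite sets). -/
def Dfin (n : ℕ) : Finset ℕ := Denumerable.ofNat (Finset ℕ) n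

/-- A set is hyperimmune if it is infinite and there is no computable `f` producing
pairwise disjoint canonical finite sets each meeting the set. -/
def Hyperimmune (B : Set ℕ) : Prop :=
  B.Infinite ∧ ¬ ∃ f : ℕ → ℕ, Computable f ∧
    (∀ m n, m ≠ n → Disjoint (Dfin (f m)) (Dfin (f n))) ∧
    ∀ n, ∃ x ∈ Dfin (f n), x ∈ B

/-- The c.e. set with index `n` in the standard numbering. -/
def Wset (n : ℕ) : Set ℕ := {x | ((Denumerable.ofNat Nat.Partrec.Code n).eval x).Dom}

/-- A set is hyperhyperimmune if it is infinite and there is no computable `f` producing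
pairwise disjoint finite c.e. sets each meeting the set. -/
def HyperHyperimmune (B : Set ℕ) : Prop :=
  B.Infinite ∧ ¬ ∃ f : ℕ → ℕ, Computable f ∧
    (∀ m n, m ≠ n → Disjoint (Wset (f m)) (Wset (f n))) ∧
    (∀ n, (Wset (f n)).Finite) ∧
    ∀ n, ∃ x ∈ Wset (f n), x ∈ B

namespace St18
open Nat.Partrec Nat.Partrec.Code Encodable Denumerable

def cde (e : ℕ) : Code := Denumerable.ofNat Code e

def Hq (k : ℕ) : Bool :=
  (evaln (k.unpair.2 + 1) (cde k.unpair.1) k.unpair.1).isSome &&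
  !(evaln k.unpair.2 (cde k.unpair.1) k.unpair.1).isSome

lemma Hq_primrec : Primrec Hq := by
  have hu : Primrec Nat.unpair := Primrec.unpair
  have hp1 : Primrec fun k : ℕ => ((k.unpair.2 + 1, cde k.unpair.1), k.unpair.1) :=
    ((Primrec.succ.comp ((Primrec.snd).comp hu)).pair
      ((Primrec.ofNat Code).comp ((Primrec.fst).comp hu))).pair ((Primrec.fst).comp hu)
  have hp2 : Primrec fun k : ℕ => ((k.unpair.2, cde k.unpair.1), k.unpair.1) :=
    (((Primrec.snd).comp hu).pair
      ((Primrec.ofNat Code).comp ((Primrec.fst).comp hu))).pair ((Primrec.fst).comp hu)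
  have h1 : Primrec fun k : ℕ => (evaln (k.unpair.2 + 1) (cde k.unpair.1) k.unpair.1).isSome :=
    Primrec.option_isSome.comp (primrec_evaln.comp hp1)
  have h2 : Primrec fun k : ℕ => (evaln k.unpair.2 (cde k.unpair.1) k.unpair.1).isSome :=
    Primrec.option_isSome.comp (primrec_evaln.comp hp2)
  exact (Primrec.dom_bool₂ (fun a b => a && !b)).comp h1 h2

lemma Hq_iff {k : ℕ} : Hq k = true ↔
    (evaln (k.unpair.2 + 1) (cde k.unpair.1) k.unpair.1).isSome = true ∧
    evaln k.unpair.2 (cde k.unpair.1) k.unpair.1 = Option.none := by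
  unfold Hq
  rcases h2 : evaln k.unpair.2 (cde k.unpair.1) k.unpair.1 with _ | v <;> simp

lemma Hq_mem {k : ℕ} (h : Hq k = true) : k.unpair.1 ∈ haltingSet := by
  obtain ⟨hs, -⟩ := Hq_iff.1 h
  obtain ⟨x, hx⟩ := Option.isSome_iff_exists.1 hs
  exact Part.dom_iff_mem.2 ⟨x, evaln_sound (by exact hx)⟩

lemma exists_Hq {e : ℕ} (he : e ∈ haltingSet) : ∃ s, Hq (Nat.pair e s) = true := by
  obtain ⟨x, hx⟩ := Part.dom_iff_mem.1 he
  obtain ⟨k, hk⟩ := evaln_complete.1 hx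
  have hex : ∃ m, (evaln m (cde e) e).isSome := ⟨k, Option.isSome_iff_exists.2 ⟨x, hk⟩⟩
  classical
  have hs0s : (evaln (Nat.find hex) (cde e) e).isSome := Nat.find_spec hex
  have hs0ne : Nat.find hex ≠ 0 := by
    intro h0; rw [h0] at hs0s; simp [evaln] at hs0s
  obtain ⟨s, hs⟩ := Nat.exists_eq_succ_of_ne_zero hs0ne
  refine ⟨s, Hq_iff.2 ?_⟩
  have hnone : ¬(evaln s (cde e) e).isSome := Nat.find_min hex (by omega)
  rw [hs] at hs0s
  simp only [Nat.unpair_pair]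
  exact ⟨hs0s, Option.not_isSome_iff_eq_none.1 hnone⟩

lemma Hq_eq_of_fst {k k' : ℕ} (h : Hq k = true) (h' : Hq k' = true)
    (he : k.unpair.1 = k'.unpair.1) : k = k' := by
  obtain ⟨hs1, hn⟩ := Hq_iff.1 h
  obtain ⟨hs1', hn'⟩ := Hq_iff.1 h'
  obtain ⟨x, hx⟩ := Option.isSome_iff_exists.1 hs1
  obtain ⟨x', hx'⟩ := Option.isSome_iff_exists.1 hs1'
  rw [he] at hx hn
  have hs : k.unpair.2 = k'.unpair.2 := by
    by_contra hne
    rcases Nat.lt_or_ge k.unpair.2 k'.unpair.2 with hlt | hge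
    · have := evaln_mono (Nat.succ_le_of_lt hlt) (Option.mem_def.2 hx)
      rw [Option.mem_def, hn'] at this; simp at this
    · have hlt' : k'.unpair.2 < k.unpair.2 := by omega
      have := evaln_mono (Nat.succ_le_of_lt hlt') (Option.mem_def.2 hx')
      rw [Option.mem_def, hn] at this; simp at this
  have hup : k.unpair = k'.unpair := Prod.ext he hs
  have := congrArg (fun p : ℕ × ℕ => Nat.pair p.1 p.2) hup
  simpa [Nat.pair_unpair] using this

lemma haltingSet_infinite : haltingSet.Infinite := by
  apply Set.infinite_of_injective_forall_mem
    (f := fun k : ℕ => Encodable.encode (Code.const k))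
  · intro a b hab
    exact const_inj (Encodable.encode_injective hab)
  · intro k
    show ((Denumerable.ofNat Code _).eval _).Dom
    rw [Denumerable.ofNat_encode, eval_const]
    trivial

lemma Hq_infinite : {k | Hq k = true}.Infinite := by
  classical
  have := Set.infinite_of_injOn_mapsTo (s := haltingSet)
    (f := fun e => if he : e ∈ haltingSet then Nat.pair e (Classical.choose (exists_Hq he)) else 0)
    (t := {k | Hq k = true}) ?_ ?_ haltingSet_infinite
  · exact this
  · intro a ha b hb hab
    simp only [dif_pos ha, dif_pos hb] at hab
    have := congrArg (fun k => k.unpair.1) hab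
    simpa [Nat.unpair_pair] using this
  · intro e he
    simp only [Set.mem_setOf_eq, dif_pos he]
    exact Classical.choose_spec (exists_Hq he)

open Nat.Partrec Nat.Partrec.Code Encodable Denumerable

def cnt : ℕ → ℕ
  | 0 => 0
  | k + 1 => cnt k + (if Hq k then 1 else 0)

lemma cnt_primrec : Primrec cnt := by
  have : Primrec (Nat.rec 0 (fun j ih => ih + (if Hq j then 1 else 0)) : ℕ → ℕ) := by
    apply Primrec.nat_rec₁
    have hcond : PrimrecPred fun p : ℕ × ℕ => Hq p.1 = true :=
      Primrec.eq.comp (Hq_primrec.comp Primrec.fst) (Primrec.const true)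
    have hI : Primrec fun p : ℕ × ℕ => if Hq p.1 then 1 else 0 :=
      Primrec.ite hcond (Primrec.const 1) (Primrec.const 0)
    exact (Primrec.nat_add.comp Primrec.snd hI).to₂
  exact this.of_eq fun k => by induction k with
    | zero => rfl
    | succ k ih => simp [cnt, ← ih]

lemma cnt_succ (k : ℕ) : cnt (k + 1) = cnt k + (if Hq k then 1 else 0) := rfl

lemma cnt_mono : Monotone cnt := by
  apply monotone_nat_of_le_succ
  intro k; rw [cnt_succ]; omega

lemma cnt_gap : ∀ {k k' : ℕ}, k ≤ k' → (∀ j, k ≤ j → j < k' → Hq j = false) → cnt k' = cnt k := by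
  intro k k'
  induction k' with
  | zero => intro h _; rw [Nat.le_zero.mp h]
  | succ m ih =>
    intro h hj
    rcases Nat.lt_or_ge k (m+1) with hlt | hge
    · have hk : k ≤ m := by omega
      rw [cnt_succ, hj m hk (by omega)]
      simpa using ih hk fun j h1 h2 => hj j h1 (by omega)
    · have : k = m + 1 := by omega
      rw [this]

lemma cnt_lt {j k : ℕ} (h : j < k) (hj : Hq j = true) : cnt j < cnt k := by
  have h1 : cnt (j+1) = cnt j + 1 := by rw [cnt_succ, hj]; simp
  have := cnt_mono (show j + 1 ≤ k from h)
  omega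

lemma pos_uniq {k k' n : ℕ} (h : Hq k = true) (h' : Hq k' = true)
    (hc : cnt k = n) (hc' : cnt k' = n) : k = k' := by
  rcases lt_trichotomy k k' with hlt | heq | hgt
  · have := cnt_lt hlt h; omega
  · exact heq
  · have := cnt_lt hgt h'; omega

lemma exists_pos : ∀ n, ∃ k, Hq k = true ∧ cnt k = n := by
  intro n
  induction n with
  | zero =>
    have hne : ∃ k, Hq k = true := by
      obtain ⟨k, hk⟩ := Hq_infinite.nonempty
      exact ⟨k, hk⟩
    classical
    refine ⟨Nat.find hne, Nat.find_spec hne, ?_⟩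
    have := cnt_gap (Nat.zero_le (Nat.find hne)) fun j _ hj => by
      have := Nat.find_min hne hj
      simpa using this
    simpa [show cnt 0 = 0 from rfl] using this
  | succ n ih =>
    obtain ⟨k, hk, hc⟩ := ih
    have hne : ∃ k', Hq k' = true ∧ k < k' := by
      obtain ⟨k', hk', hgt⟩ := Hq_infinite.exists_gt k
      exact ⟨k', hk', hgt⟩
    classical
    refine ⟨Nat.find hne, (Nat.find_spec hne).1, ?_⟩
    have hgap : cnt (Nat.find hne) = cnt (k + 1) := by
      have hlt : k < Nat.find hne := (Nat.find_spec hne).2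
      apply cnt_gap hlt
      intro j h1 h2
      have := Nat.find_min hne h2
      by_contra hb
      simp only [Bool.not_eq_false] at hb
      exact this ⟨hb, by omega⟩
    rw [hgap, cnt_succ]
    simp [hk, hc]

noncomputable def pos (n : ℕ) : ℕ := Classical.choose (exists_pos n)

lemma pos_spec (n : ℕ) : Hq (pos n) = true ∧ cnt (pos n) = n :=
  Classical.choose_spec (exists_pos n)

noncomputable def a (n : ℕ) : ℕ := (pos n).unpair.1

lemma pos_computable : Computable pos := by
  have hc : Computable₂ fun (n k : ℕ) => (Hq k && (cnt k == n) : Bool) := by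
    have : Primrec₂ fun (n k : ℕ) => (Hq k && (cnt k == n) : Bool) :=
      (Primrec.dom_bool₂ (· && ·)).comp₂ ((Hq_primrec.comp Primrec.snd).to₂)
        ((Primrec.beq.comp (cnt_primrec.comp Primrec.snd) Primrec.fst).to₂)
    exact this.to_comp
  have hp : Partrec fun n =>
      Nat.rfind ((fun k => (Hq k && (cnt k == n) : Bool)) : ℕ →. Bool) :=
    Partrec.rfind hc.partrec₂
  apply Partrec.of_eq_tot hp
  intro n
  apply Nat.mem_rfind.2
  constructor
  · simp [Part.mem_some_iff, (pos_spec n).1, (pos_spec n).2]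
  · intro m hm
    show false ∈ (Part.some (Hq m && (cnt m == n) : Bool))
    simp only [Part.mem_some_iff]
    cases h : Hq m with
    | false => simp [h]
    | true =>
      suffices hcc : cnt m ≠ n by simp [h, hcc]
      intro hc
      exact absurd (pos_uniq h (pos_spec n).1 hc (pos_spec n).2) (by omega)

lemma a_computable : Computable a :=
  (Primrec.fst.comp Primrec.unpair).to_comp.comp pos_computable

lemma a_mem (n : ℕ) : a n ∈ haltingSet := Hq_mem (pos_spec n).1

lemma a_injective : Function.Injective a := by
  intro m n h
  have := Hq_eq_of_fst (pos_spec m).1 (pos_spec n).1 h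
  have hm := (pos_spec m).2
  have hn := (pos_spec n).2
  rw [this] at hm
  omega

lemma a_surj {e : ℕ} (he : e ∈ haltingSet) : ∃ n, a n = e := by
  obtain ⟨s, hs⟩ := exists_Hq he
  refine ⟨cnt (Nat.pair e s), ?_⟩
  have := pos_uniq (pos_spec (cnt (Nat.pair e s))).1 hs (pos_spec _).2 rfl
  unfold a
  rw [this, Nat.unpair_pair]


def Aset : Set ℕ := {n | ∃ m, n < m ∧ a m < a n}

def TS (s : ℕ) : Prop := ∀ m, s < m → a s < a m

lemma compl_Aset : (Aset)ᶜ = {s | TS s} := by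
  ext s
  simp only [Aset, Set.mem_compl_iff, Set.mem_setOf_eq, TS, not_exists]
  constructor
  · intro h m hm
    have h1 := h m
    have h2 : a m ≠ a s := fun he => (by omega : s ≠ m) (a_injective he.symm)
    omega
  · intro h m
    intro ⟨h1, h2⟩
    exact absurd (h m h1) (by omega)

lemma ts_exists (l : ℕ) : ∃ s, l ≤ s ∧ ∀ m, l ≤ m → a s ≤ a m := by
  have hne : {v | ∃ m, l ≤ m ∧ a m = v}.Nonempty := ⟨a l, l, le_refl l, rfl⟩
  obtain ⟨m, hm, hv⟩ := Nat.sInf_mem hne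
  refine ⟨m, hm, fun m' hm' => ?_⟩
  rw [hv]
  exact Nat.sInf_le ⟨m', hm', rfl⟩

noncomputable def tmin (l : ℕ) : ℕ :=
  sInf {s | l ≤ s ∧ ∀ m, l ≤ m → a s ≤ a m}

lemma tmin_spec (l : ℕ) : l ≤ tmin l ∧ ∀ m, l ≤ m → a (tmin l) ≤ a m :=
  Nat.sInf_mem (ts_exists l)

lemma tmin_strict (l m : ℕ) (hm : l ≤ m) (hne : m ≠ tmin l) : a (tmin l) < a m := by
  have := (tmin_spec l).2 m hm
  have h2 : a (tmin l) ≠ a m := fun he => hne (a_injective he.symm)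
  omega

lemma tmin_uniq {l v : ℕ} (h1 : l ≤ v) (h2 : ∀ m, l ≤ m → m ≠ v → a v < a m) : tmin l = v := by
  by_contra hne
  have ha := tmin_strict l v h1 (fun h => hne h.symm)
  have hb := h2 (tmin l) (tmin_spec l).1 (fun h => hne h)
  omega

noncomputable def b : ℕ → ℕ := fun n =>
  Nat.rec (tmin 0) (fun _ ih => tmin (ih + 1)) n

lemma b_zero : b 0 = tmin 0 := rfl
lemma b_succ (n : ℕ) : b (n + 1) = tmin (b n + 1) := rfl

lemma b_lt (n : ℕ) : b n < b (n + 1) := by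
  rw [b_succ]
  have := (tmin_spec (b n + 1)).1
  omega

lemma b_strictMono : StrictMono b := strictMono_nat_of_lt_succ b_lt

lemma b_ts (n : ℕ) : TS (b n) := by
  cases n with
  | zero =>
    intro m hm
    rw [b_zero] at hm ⊢
    exact tmin_strict 0 m (Nat.zero_le m) (by omega)
  | succ n =>
    intro m hm
    rw [b_succ] at hm ⊢
    have := (tmin_spec (b n + 1)).1
    exact tmin_strict (b n + 1) m (by omega) (by omega)

lemma b_mem (n : ℕ) : b n ∈ (Aset)ᶜ := by rw [compl_Aset]; exact b_ts n

lemma compl_Aset_infinite : (Aset)ᶜ.Infinite :=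
  Set.infinite_of_injective_forall_mem b_strictMono.injective b_mem

/-- argmin of `a` on `[l, l+j]` -/
noncomputable def gmin (l j : ℕ) : ℕ :=
  Nat.rec l (fun k ih => if a (l + (k + 1)) < a ih then l + (k + 1) else ih) j

lemma gmin_zero (l : ℕ) : gmin l 0 = l := rfl
lemma gmin_succ (l k : ℕ) :
    gmin l (k + 1) = if a (l + (k + 1)) < a (gmin l k) then l + (k + 1) else gmin l k := rfl

lemma gmin_range (l : ℕ) : ∀ j, l ≤ gmin l j ∧ gmin l j ≤ l + j
  | 0 => by simp [gmin_zero]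
  | j + 1 => by
    have := gmin_range l j
    rw [gmin_succ]
    split <;> omega

lemma gmin_min (l : ℕ) : ∀ j s, l ≤ s → s ≤ l + j → a (gmin l j) ≤ a s
  | 0, s, h1, h2 => by
    have hs : s = l := by omega
    simp [gmin_zero, hs]
  | j + 1, s, h1, h2 => by
    rcases Nat.lt_or_ge s (l + (j + 1)) with hlt | hge
    · have := gmin_min l j s h1 (by omega)
      rw [gmin_succ]
      split <;> omega
    · have hs : s = l + (j + 1) := by omega
      subst hs
      rw [gmin_succ]
      split <;> omega

noncomputable def amin (l r : ℕ) : ℕ := gmin l (r - l)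

lemma amin_range {l r : ℕ} (h : l ≤ r) : l ≤ amin l r ∧ amin l r ≤ r := by
  have := gmin_range l (r - l)
  unfold amin
  omega

lemma amin_min {l r : ℕ} (s : ℕ) (h1 : l ≤ s) (h2 : s ≤ r) : a (amin l r) ≤ a s :=
  gmin_min l (r - l) s h1 (by omega)

lemma amin_strict {l r s : ℕ} (h1 : l ≤ s) (h2 : s ≤ r) (hne : s ≠ amin l r) :
    a (amin l r) < a s := by
  have := amin_min s h1 h2
  have h3 : a (amin l r) ≠ a s := fun he => hne (a_injective he.symm)
  omega

lemma amin_uniq {l r v : ℕ} (h1 : l ≤ v) (h2 : v ≤ r)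
    (h : ∀ s, l ≤ s → s ≤ r → s ≠ v → a v < a s) : amin l r = v := by
  by_contra hne
  have hr := amin_range (le_trans h1 h2)
  have ha := amin_strict h1 h2 (fun he => hne he.symm)
  have hb := h (amin l r) hr.1 hr.2 (fun he => hne he)
  omega

noncomputable def M (n t : ℕ) : Option ℕ :=
  Nat.rec (some (amin 0 t))
    (fun _ ih => ih.bind fun v => if v < t then some (amin (v + 1) t) else none) n

lemma M_zero (t : ℕ) : M 0 t = some (amin 0 t) := rfl
lemma M_succ (n t : ℕ) :
    M (n + 1) t = (M n t).bind fun v => if v < t then some (amin (v + 1) t) else none := rfl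

lemma M_le {n t v : ℕ} (h : M n t = some v) : v ≤ t := by
  induction n generalizing v with
  | zero =>
    rw [M_zero] at h
    injection h with h
    have := amin_range (Nat.zero_le t)
    omega
  | succ n ih =>
    rw [M_succ] at h
    simp only [Option.bind_eq_some_iff] at h
    obtain ⟨w, hw, hv⟩ := h
    split at hv
    · injection hv with hv
      have := amin_range (show w + 1 ≤ t by omega)
      omega
    · simp at hv

lemma M_succ_lt {n t v : ℕ} (h : M (n + 1) t = some v) :
    ∃ w, M n t = some w ∧ w < v ∧ w < t ∧ v = amin (w + 1) t := by
  rw [M_succ] at h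
  simp only [Option.bind_eq_some_iff] at h
  obtain ⟨w, hw, hv⟩ := h
  split at hv
  · injection hv with hv
    have := amin_range (show w + 1 ≤ t by omega)
    exact ⟨w, hw, by omega, by omega, hv.symm⟩
  · simp at hv

lemma M_idx_lt : ∀ (d n t v v' : ℕ), M n t = some v → M (n + (d + 1)) t = some v' → v < v' := by
  intro d
  induction d with
  | zero =>
    intro n t v v' h h'
    obtain ⟨w, hw, hlt, -⟩ := M_succ_lt (show M (n + 1) t = some v' from h')
    rw [h] at hw
    injection hw with hw
    omega
  | succ d ih =>
    intro n t v v' h h'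
    have h'' : M ((n + (d + 1)) + 1) t = some v' := by
      have he : (n + (d + 1)) + 1 = n + (d + 1 + 1) := by omega
      rw [he]; exact h'
    obtain ⟨w, hw, hlt, -⟩ := M_succ_lt h''
    exact lt_trans (ih n t v w h hw) hlt

lemma M_lt_of_idx_lt {n n' t v v' : ℕ} (h : n < n') (hv : M n t = some v)
    (hv' : M n' t = some v') : v < v' := by
  obtain ⟨d, rfl⟩ : ∃ d, n' = n + (d + 1) := ⟨n' - n - 1, by omega⟩
  exact M_idx_lt d n t v v' hv hv'

lemma M_det : ∀ n t t' v, t ≤ t' → M n t' = some v → v ≤ t → M n t = some v := by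
  intro n
  induction n with
  | zero =>
    intro t t' v htt h hv
    rw [M_zero] at h ⊢
    injection h with h
    congr 1
    apply amin_uniq (Nat.zero_le v) hv
    intro s _ hs hne
    rw [← h]
    exact amin_strict (Nat.zero_le s) (by omega) (by rw [h]; exact hne)
  | succ n ih =>
    intro t t' v htt h hv
    obtain ⟨w, hw, hwv, hwt, hveq⟩ := M_succ_lt h
    have hwt' : w < t := by omega
    have hMn : M n t = some w := ih t t' w htt hw (by omega)
    rw [M_succ, hMn]
    simp only [Option.bind_some, if_pos hwt']
    congr 1
    apply amin_uniq (show w + 1 ≤ v by omega) hv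
    intro s hs1 hs2 hne
    rw [hveq]
    exact amin_strict hs1 (by omega) (by rw [← hveq]; exact hne)

lemma M_conv {n t : ℕ} (h : b n ≤ t) : M n t = some (b n) := by
  induction n generalizing t with
  | zero =>
    rw [M_zero]
    congr 1
    rw [b_zero] at h ⊢
    apply amin_uniq (Nat.zero_le _) h
    intro s _ _ hne
    exact tmin_strict 0 s (Nat.zero_le s) hne
  | succ n ih =>
    have hb := b_lt n
    have hMn : M n t = some (b n) := ih (by omega)
    rw [M_succ, hMn]
    simp only [Option.bind_some, if_pos (show b n < t by omega)]
    congr 1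
    rw [b_succ] at h ⊢
    apply amin_uniq (by have := (tmin_spec (b n + 1)).1; omega) h
    intro s hs1 hs2 hne
    exact tmin_strict (b n + 1) s hs1 hne

lemma M_disjoint_lt {n n' : ℕ} (hlt : n < n') {v t t' : ℕ}
    (h : M n t = some v) (h' : M n' t' = some v) : False := by
  rcases le_total t t' with htt | htt
  · have h2 := M_det n' t t' v htt h' (M_le h)
    exact lt_irrefl v (M_lt_of_idx_lt hlt h h2)
  · have h2 := M_det n t' t v htt h (M_le h')
    exact lt_irrefl v (M_lt_of_idx_lt hlt h2 h')

lemma M_disjoint {n n' : ℕ} (hne : n ≠ n') {v t t' : ℕ}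
    (h : M n t = some v) (h' : M n' t' = some v) : False := by
  rcases lt_or_gt_of_ne hne with hlt | hgt
  · exact M_disjoint_lt hlt h h'
  · exact M_disjoint_lt hgt h' h

lemma M_finite (n : ℕ) : {x | ∃ t, M n t = some x}.Finite := by
  apply Set.Finite.subset (Set.Finite.image (fun t => (M n t).getD 0) (Set.finite_Iic (b n)))
  intro x ⟨t, ht⟩
  rcases le_total t (b n) with hle | hle
  · exact ⟨t, Set.mem_Iic.2 hle, by simp [ht]⟩
  · have hc := M_conv (n := n) hle
    rw [hc] at ht
    injection ht with ht
    refine ⟨b n, Set.self_mem_Iic, ?_⟩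
    show (M n (b n)).getD 0 = x
    rw [M_conv (le_refl _)]
    simpa using ht

open Nat.Partrec Nat.Partrec.Code Encodable Denumerable

lemma nat_lt_comp : Computable₂ fun (u v : ℕ) => decide (u < v) :=
  Primrec.nat_lt.decide.to_comp

lemma gmin_computable : Computable₂ gmin := by
  have ha := a_computable
  apply Computable₂.mk
  have hf : Computable fun p : ℕ × ℕ => p.2 := Computable.snd
  have hg : Computable fun p : ℕ × ℕ => p.1 := Computable.fst
  have harg : Computable fun q : (ℕ × ℕ) × ℕ × ℕ => q.1.1 + (q.2.1 + 1) :=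
    (Primrec.nat_add.comp (Primrec.fst.comp Primrec.fst)
      (Primrec.succ.comp (Primrec.fst.comp Primrec.snd))).to_comp
  have hu : Computable fun q : (ℕ × ℕ) × ℕ × ℕ => a (q.1.1 + (q.2.1 + 1)) := ha.comp harg
  have hv : Computable fun q : (ℕ × ℕ) × ℕ × ℕ => a q.2.2 :=
    ha.comp (Computable.snd.comp Computable.snd)
  have hc : Computable fun q : (ℕ × ℕ) × ℕ × ℕ =>
      decide (a (q.1.1 + (q.2.1 + 1)) < a q.2.2) := nat_lt_comp.comp hu hv
  have hcond : Computable fun q : (ℕ × ℕ) × ℕ × ℕ =>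
      cond (decide (a (q.1.1 + (q.2.1 + 1)) < a q.2.2)) (q.1.1 + (q.2.1 + 1)) q.2.2 :=
    Computable.cond hc harg (Computable.snd.comp Computable.snd)
  have hh : Computable₂ fun (p : ℕ × ℕ) (q : ℕ × ℕ) =>
      if a (p.1 + (q.1 + 1)) < a q.2 then p.1 + (q.1 + 1) else q.2 := by
    apply Computable₂.mk
    apply hcond.of_eq
    intro q
    by_cases h : a (q.1.1 + (q.2.1 + 1)) < a q.2.2 <;> simp [h]
  have := Computable.nat_rec hf hg hh
  apply this.of_eq
  intro p
  simp only []
  induction p.2 with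
  | zero => rfl
  | succ k ih => rw [gmin_succ, ← ih]

lemma amin_computable : Computable₂ amin := by
  apply Computable₂.mk
  have : Computable fun p : ℕ × ℕ => gmin p.1 (p.2 - p.1) :=
    gmin_computable.comp Computable.fst
      (Primrec.nat_sub.to_comp.comp Computable.snd Computable.fst)
  exact this.of_eq fun p => rfl

lemma M_computable : Computable₂ M := by
  apply Computable₂.mk
  have hf : Computable fun p : ℕ × ℕ => p.1 := Computable.fst
  have hg : Computable fun p : ℕ × ℕ => (some (amin 0 p.2) : Option ℕ) :=
    Computable.option_some.comp (amin_computable.comp (Computable.const 0) Computable.snd)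
  have hinner : Computable₂ fun (q : (ℕ × ℕ) × ℕ × Option ℕ) (v : ℕ) =>
      if v < q.1.2 then (some (amin (v + 1) q.1.2) : Option ℕ) else none := by
    apply Computable₂.mk
    have hc : Computable fun r : ((ℕ × ℕ) × ℕ × Option ℕ) × ℕ => decide (r.2 < r.1.1.2) :=
      nat_lt_comp.comp Computable.snd (Computable.snd.comp (Computable.fst.comp Computable.fst))
    have hx : Computable fun r : ((ℕ × ℕ) × ℕ × Option ℕ) × ℕ =>
        (some (amin (r.2 + 1) r.1.1.2) : Option ℕ) :=
      Computable.option_some.comp (amin_computable.comp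
        (Primrec.succ.to_comp.comp Computable.snd)
        (Computable.snd.comp (Computable.fst.comp Computable.fst)))
    have := Computable.cond hc hx (Computable.const (none : Option ℕ))
    apply this.of_eq
    intro r
    by_cases h : r.2 < r.1.1.2 <;> simp [h]
  have hh : Computable₂ fun (p : ℕ × ℕ) (q : ℕ × Option ℕ) =>
      q.2.bind fun v => if v < p.2 then (some (amin (v + 1) p.2) : Option ℕ) else none := by
    apply Computable₂.mk
    exact Computable.option_bind (Computable.snd.comp Computable.snd) hinner
  have := Computable.nat_rec hf hg hh
  apply this.of_eq
  intro p
  simp only []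
  induction p.1 with
  | zero => rfl
  | succ k ih => rw [M_succ, ← ih]

noncomputable def F : ℕ →. ℕ := fun k =>
  Nat.rfind ((fun t => (decide (M k.unpair.1 t = (some k.unpair.2 : Option ℕ)) : Bool)) : ℕ →. Bool)

lemma F_partrec : Partrec F := by
  apply Partrec.rfind
  have : Computable₂ fun (k t : ℕ) => (decide (M k.unpair.1 t = (some k.unpair.2 : Option ℕ)) : Bool) := by
    have heq : Computable₂ fun (u v : Option ℕ) => decide (u = v) := Primrec.eq.decide.to_comp
    exact heq.comp
      (M_computable.comp ((Primrec.fst.comp Primrec.unpair).to_comp.comp Computable.fst)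
        Computable.snd)
      (Computable.option_some.comp
        ((Primrec.snd.comp Primrec.unpair).to_comp.comp Computable.fst))
  exact this.partrec₂

lemma F_dom (k : ℕ) : (F k).Dom ↔ ∃ t, M k.unpair.1 t = some k.unpair.2 := by
  constructor
  · intro h
    obtain ⟨t, ht⟩ := Part.dom_iff_mem.1 h
    have := Nat.rfind_spec ht
    simp only [Part.coe_some, Part.mem_some_iff] at this
    exact ⟨t, of_decide_eq_true this.symm⟩
  · intro ⟨t, ht⟩
    apply Nat.rfind_dom.2
    exact ⟨t, by simp [ht], fun _ => trivial⟩

noncomputable def cF : Code := Classical.choose (exists_code.1 (Partrec.nat_iff.1 F_partrec))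

lemma cF_eval : eval cF = F := Classical.choose_spec (exists_code.1 (Partrec.nat_iff.1 F_partrec))

noncomputable def fcode (n : ℕ) : ℕ := encode (curry cF n)

lemma fcode_computable : Computable fcode :=
  (Primrec.encode.comp (primrec₂_curry.comp (Primrec.const cF) Primrec.id)).to_comp

lemma Wset_fcode (n : ℕ) : Wset (fcode n) = {x | ∃ t, M n t = some x} := by
  ext x
  show ((Denumerable.ofNat Code (fcode n)).eval x).Dom ↔ _
  rw [show Denumerable.ofNat Code (fcode n) = curry cF n from Denumerable.ofNat_encode _]
  rw [eval_curry, cF_eval]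
  rw [F_dom]
  simp [Nat.unpair_pair]

lemma not_hh : ¬ HyperHyperimmune (Aset)ᶜ := by
  intro ⟨_, h⟩
  apply h
  refine ⟨fcode, fcode_computable, ?_, ?_, ?_⟩
  · intro m n hmn
    rw [Set.disjoint_left, Wset_fcode, Wset_fcode]
    intro x ⟨t, ht⟩ ⟨t', ht'⟩
    exact M_disjoint hmn ht ht'
  · intro n
    rw [Wset_fcode]
    exact M_finite n
  · intro n
    refine ⟨b n, ?_, b_mem n⟩
    rw [Wset_fcode]
    exact ⟨b n, M_conv le_rfl⟩

open Nat.Partrec Nat.Partrec.Code Encodable Denumerable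

lemma pair_ge (x y : ℕ) : x + y ≤ Nat.pair x y := by
  rcases lt_or_ge x y with h | h
  · simp only [Nat.pair, if_pos h]; nlinarith
  · simp only [Nat.pair, if_neg (not_lt.2 h)]; nlinarith

lemma raise'_le : ∀ (l : List ℕ) (n x : ℕ), x ∈ Denumerable.raise' l n → x ≤ encode l + n
  | [], _, _, h => by simp [Denumerable.raise'] at h
  | m :: l, n, x, h => by
    rcases List.mem_cons.1 h with h1 | h1
    · have := pair_ge m (encode l)
      simp only [encode_list_cons, encode_nat]
      omega
    · have := raise'_le l (m + n + 1) x h1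
      have h2 := pair_ge m (encode l)
      simp only [encode_list_cons, encode_nat]
      omega

lemma mem_Dfin_le {m x : ℕ} (h : x ∈ Dfin m) : x ≤ m := by
  have hD : Dfin m = Finset.map (eqv ℕ).symm.toEmbedding
      (Denumerable.raise'Finset (ofNat (List ℕ) m) 0) := by
    apply ofNat_of_decode; rfl
  rw [hD] at h
  simp only [Finset.mem_map, Denumerable.raise'Finset, Finset.mem_mk, Multiset.mem_coe] at h
  obtain ⟨y, hy, hyx⟩ := h
  have hyx' : y = x := hyx
  subst hyx'
  simpa using raise'_le _ _ _ hy

lemma ce_Aset : CE Aset := by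
  refine ⟨fun n => Nat.rfind
    ((fun m => (decide (n < m ∧ a m < a n) : Bool)) : ℕ →. Bool), ?_, ?_⟩
  · apply Partrec.rfind
    have : Computable₂ fun (n m : ℕ) => (decide (n < m ∧ a m < a n) : Bool) := by
      have h1 : Computable fun p : ℕ × ℕ => decide (p.1 < p.2) :=
        nat_lt_comp.comp Computable.fst Computable.snd
      have h2 : Computable fun p : ℕ × ℕ => decide (a p.2 < a p.1) :=
        nat_lt_comp.comp (a_computable.comp Computable.snd) (a_computable.comp Computable.fst)
      have hand : Computable₂ fun (u v : Bool) => (u && v) := Primrec.dom_bool₂ (· && ·) |>.to_comp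
      apply Computable₂.mk
      apply (hand.comp h1 h2).of_eq
      intro p
      by_cases hp1 : p.1 < p.2 <;> by_cases hp2 : a p.2 < a p.1 <;> simp [hp1, hp2]
    exact this.partrec₂
  · intro n
    constructor
    · intro ⟨m, hm1, hm2⟩
      apply Nat.rfind_dom.2
      exact ⟨m, by simp [hm1, hm2], fun _ => trivial⟩
    · intro h
      obtain ⟨t, ht⟩ := Part.dom_iff_mem.1 h
      have := Nat.rfind_spec ht
      simp only [Part.coe_some, Part.mem_some_iff] at this
      have := of_decide_eq_true this.symm
      exact ⟨t, this⟩

lemma diag_not_computable : ¬ ComputablePred (· ∈ haltingSet) := by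
  intro hC
  obtain ⟨fb, hfb, hpb⟩ := ComputablePred.computable_iff.1 hC
  have hp : Partrec fun x : ℕ => cond (fb x) Part.none (Part.some 0) :=
    Partrec.cond hfb Partrec.none ((Computable.const 0).partrec)
  obtain ⟨c0, hc0⟩ := exists_code.1 (Partrec.nat_iff.1 hp)
  set e := encode c0 with he
  have hmem : e ∈ haltingSet ↔ (eval c0 e).Dom := by
    show ((Denumerable.ofNat Code e).eval e).Dom ↔ _
    rw [he, Denumerable.ofNat_encode]
  rw [hc0] at hmem
  by_cases hin : e ∈ haltingSet
  · have : fb e = true := cast (congrFun hpb e) hin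
    rw [hmem] at hin
    simp [this] at hin
  · have : fb e = false := by
      cases hfe : fb e
      · rfl
      · exact absurd (cast (congrFun hpb e).symm hfe) hin
    apply hin
    rw [hmem]
    simp [this]

lemma hyperimmune_B : Hyperimmune (Aset)ᶜ := by
  refine ⟨compl_Aset_infinite, ?_⟩
  rintro ⟨f, hf, hdisj, hmeet⟩
  classical
  -- choose witnesses
  have hx : ∀ n, ∃ x, x ∈ Dfin (f n) ∧ x ∈ (Aset)ᶜ := by
    intro n; obtain ⟨x, h1, h2⟩ := hmeet n; exact ⟨x, h1, h2⟩
  set x : ℕ → ℕ := fun n => Classical.choose (hx n) with hxdef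
  have hxs : ∀ n, (x n) ∈ Dfin (f n) ∧ (x n) ∈ (Aset)ᶜ := fun n => Classical.choose_spec (hx n)
  have hxinj : Function.Injective x := by
    intro m n hmn
    by_contra hne
    have := hdisj m n hne
    exact (Finset.disjoint_left.1 this) (hxs m).1 (hmn ▸ (hxs n).1)
  -- the bound function
  set g : ℕ → ℕ := fun y => Nat.rec (f 0) (fun k ih => max ih (f (k + 1))) y with hgdef
  have hg0 : g 0 = f 0 := rfl
  have hgs : ∀ y, g (y + 1) = max (g y) (f (y + 1)) := fun y => rfl
  have hgb : ∀ n y, n ≤ y → f n ≤ g y := by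
    intro n y
    induction y with
    | zero => intro h; rw [Nat.le_zero.1 h, hg0]
    | succ y ih =>
      intro h
      rw [hgs]
      rcases Nat.lt_or_ge n (y + 1) with h1 | h1
      · exact le_trans (ih (by omega)) (le_max_left _ _)
      · have : n = y + 1 := by omega
        rw [this]
        exact le_max_right _ _
  have hgcomp : Computable g := by
    have hstep : Computable₂ fun (_ : ℕ) (q : ℕ × ℕ) => max q.2 (f (q.1 + 1)) := by
      apply Computable₂.mk
      exact Primrec.nat_max.to_comp.comp (Computable.snd.comp Computable.snd)
        (hf.comp (Primrec.succ.to_comp.comp (Computable.fst.comp Computable.snd)))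
    have := Computable.nat_rec (Computable.id (α := ℕ)) (Computable.const (f 0)) hstep
    exact this.of_eq fun y => rfl
  -- key: for each y there is a true stage s ≤ g y with y ≤ a s
  have hkey : ∀ y, ∃ s, TS s ∧ s ≤ g y ∧ y ≤ a s := by
    intro y
    have hex : ∃ n : Fin (y + 1), y ≤ a (x n.val) := by
      by_contra hall
      push_neg at hall
      have hinj2 : Function.Injective fun n : Fin (y + 1) => (⟨a (x n.val), hall n⟩ : Fin y) := by
        intro m n hmn
        simp only [Fin.mk.injEq] at hmn
        exact Fin.ext (hxinj (a_injective hmn))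
      have hcard := Fintype.card_le_of_injective _ hinj2
      simp only [Fintype.card_fin] at hcard
      omega
    obtain ⟨n, hn⟩ := hex
    refine ⟨x n.val, ?_, ?_, hn⟩
    · have := (hxs n.val).2; rwa [compl_Aset] at this
    · exact le_trans (mem_Dfin_le (hxs n.val).1) (hgb n.val y (Nat.lt_succ_iff.1 n.isLt))
  -- decidability of haltingSet
  have hdec : ∀ y, y ∈ haltingSet ↔ ∃ m, m ≤ g y ∧ a m = y := by
    intro y
    constructor
    · intro hy
      obtain ⟨m, hm⟩ := a_surj hy
      obtain ⟨s, hs1, hs2, hs3⟩ := hkey y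
      refine ⟨m, ?_, hm⟩
      rcases Nat.lt_or_ge s m with hlt | hge
      · have := hs1 m hlt
        omega
      · omega
    · intro ⟨m, _, hm⟩
      rw [← hm]
      exact a_mem m
  -- Bool test
  set exB : ℕ → ℕ → Bool := fun y k => Nat.rec false (fun m ih => ih || (a m == y)) k with hexB
  have hexB0 : ∀ y, exB y 0 = false := fun _ => rfl
  have hexBs : ∀ y k, exB y (k + 1) = (exB y k || (a k == y)) := fun _ _ => rfl
  have hexB_iff : ∀ y k, exB y k = true ↔ ∃ m, m < k ∧ a m = y := by
    intro y k
    induction k with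
    | zero => simp [hexB0]
    | succ k ih =>
      rw [hexBs]
      simp only [Bool.or_eq_true, ih, beq_iff_eq]
      constructor
      · rintro (⟨m, h1, h2⟩ | h)
        · exact ⟨m, by omega, h2⟩
        · exact ⟨k, by omega, h⟩
      · rintro ⟨m, h1, h2⟩
        rcases Nat.lt_or_ge m k with h3 | h3
        · exact Or.inl ⟨m, h3, h2⟩
        · have : m = k := by omega
          subst this
          exact Or.inr h2
  have hexB_comp : Computable₂ exB := by
    apply Computable₂.mk
    have := Computable.nat_rec (Computable.snd (α := ℕ) (β := ℕ))
      (Computable.const false)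
      (show Computable₂ fun (p : ℕ × ℕ) (q : ℕ × Bool) => (q.2 || (a q.1 == p.1)) from by
        apply Computable₂.mk
        have hor : Computable₂ fun (u v : Bool) => (u || v) := Primrec.dom_bool₂ (· || ·) |>.to_comp
        have hbeq : Computable₂ fun (u v : ℕ) => (u == v) := Primrec.beq.to_comp
        exact hor.comp (Computable.snd.comp Computable.snd)
          (hbeq.comp (a_computable.comp (Computable.fst.comp Computable.snd))
            (Computable.fst.comp Computable.fst)))
    exact this.of_eq fun p => rfl
  -- haltingSet computable, contradiction
  apply diag_not_computable
  apply ComputablePred.computable_iff.2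
  refine ⟨fun y => exB y (g y + 1), ?_, ?_⟩
  · exact hexB_comp.comp Computable.id (Primrec.succ.to_comp.comp hgcomp)
  · funext y
    apply propext
    rw [hdec y]
    show (∃ m, m ≤ g y ∧ a m = y) ↔ exB y (g y + 1) = true
    constructor
    · rintro ⟨m, h1, h2⟩; exact (hexB_iff y (g y + 1)).2 ⟨m, by omega, h2⟩
    · intro h
      obtain ⟨m, h1, h2⟩ := (hexB_iff y (g y + 1)).1 h
      exact ⟨m, by omega, h2⟩

end St18

theorem stmt18 : ∃ A : Set ℕ, CE A ∧ (Aᶜ).Infinite ∧ Hyperimmune Aᶜ ∧ ¬ HyperHyperimmune Aᶜ :=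
  ⟨St18.Aset, St18.ce_Aset, St18.compl_Aset_infinite, St18.hyperimmune_B, St18.not_hh⟩
end
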